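/- Let U be an ultrafilter on a set M with iterated powers U^n, and let f : M^k → M. If {(x₁,…,x_k,y₁,…,y_k) ∈ M^{2k} : f(x₁,…,x_k) = f(y₁,…,y_k)} ∈ U^{2k}, then there exists r ∈ M such that {(y₁,…,y_k) ∈ M^k : f(y₁,…,y_k) = r} ∈ U^k. -/

import Mathlib

/-- Left section of a subset of M^{n+1}. -/
def secL {M : Type*} {n : ℕ} (X : Set (Fin (n + 1) → M)) (m : M) : Set (Fin n → M) :=
  {s | Fin.cons m s ∈ X}

/-- `iterMem U n X` says X ∈ U^{n+1} (so `iterMem U 0` corresponds to U¹ = U). -/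
def iterMem {M : Type*} (U : Ultrafilter M) : (n : ℕ) → Set (Fin (n + 1) → M) → Prop
  | 0, X => {m : M | (fun _ => m) ∈ X} ∈ U
  | n + 1, X => {m : M | iterMem U n (secL X m)} ∈ U

private def app {M : Type*} {n k : ℕ} (x : Fin (n + 1) → M) (y : Fin (k + 1) → M) :
    Fin (n + (k + 1) + 1) → M :=
  fun j => if h : (j : ℕ) < n + 1 then x ⟨j, h⟩ else y ⟨(j : ℕ) - (n + 1), by omega⟩

private lemma iterMem_congr {M : Type*} (U : Ultrafilter M) {n : ℕ}
    {X Y : Set (Fin (n + 1) → M)} (h : ∀ t, t ∈ X ↔ t ∈ Y) :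
    iterMem U n X → iterMem U n Y := fun hX => Set.ext h ▸ hX

private lemma iterMem_cast {M : Type*} (U : Ultrafilter M) {n m : ℕ} (h : n = m)
    (X : Set (Fin (n + 1) → M)) (Y : Set (Fin (m + 1) → M))
    (hY : ∀ t : Fin (m + 1) → M,
      t ∈ Y ↔ (fun i : Fin (n + 1) => t (Fin.cast (by omega) i)) ∈ X) :
    iterMem U n X → iterMem U m Y := by
  subst h
  intro hX
  have hYX : Y = X := Set.ext fun t => (hY t).trans Iff.rfl
  rwa [hYX]

private lemma exists_sec {M : Type*} (U : Ultrafilter M) (k : ℕ) :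
    ∀ (n : ℕ) (X : Set (Fin (n + (k + 1) + 1) → M)),
      iterMem U (n + (k + 1)) X →
      ∃ x : Fin (n + 1) → M, iterMem U k {y : Fin (k + 1) → M | app x y ∈ X} := by
  intro n
  induction n with
  | zero =>
      intro X hX
      have hX' : {m : M | iterMem U (0 + k) (secL X m)} ∈ U := hX
      obtain ⟨m, hm⟩ := Ultrafilter.nonempty_of_mem hX'
      refine ⟨fun _ => m, ?_⟩
      refine iterMem_cast U (by omega : 0 + k = k) (secL X m) _ ?_ hm
      intro y
      have heq : (Fin.cons m (fun i : Fin (0 + k + 1) => y (Fin.cast (by omega) i))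
          : Fin (0 + (k + 1) + 1) → M) = app (fun _ : Fin 1 => m) y := by
        funext j
        induction j using Fin.cases with
        | zero =>
            simp only [Fin.cons_zero, app, Fin.val_zero]
            refine Eq.trans ?_ (dif_pos (by omega)).symm; rfl
        | succ i =>
            simp only [Fin.cons_succ, app, Fin.cast, Fin.val_succ]
            rw [dif_neg (by omega)]
            exact congrArg y (Fin.ext (show (i:ℕ) = (i:ℕ) + 1 - (0 + 1) by omega))
      simp only [app, secL, Set.mem_setOf_eq, heq]
  | succ n ih =>
      intro X hX
      have hX' : {m : M | iterMem U (n + 1 + k) (secL X m)} ∈ U := hX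
      obtain ⟨m, hm⟩ := Ultrafilter.nonempty_of_mem hX'
      have hm' : iterMem U (n + (k + 1))
          {v : Fin (n + (k + 1) + 1) → M |
            (Fin.cons m (fun i : Fin (n + 1 + k + 1) => v (Fin.cast (by omega) i))
              : Fin (n + 1 + (k + 1) + 1) → M) ∈ X} := by
        refine iterMem_cast U (by omega : n + 1 + k = n + (k + 1)) (secL X m) _ ?_ hm
        intro v
        exact Iff.rfl
      obtain ⟨x', hx'⟩ := ih _ hm'
      refine ⟨Fin.cons m x', ?_⟩
      refine iterMem_congr U (fun y => ?_) hx'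
      simp only [Set.mem_setOf_eq]
      have heq : (Fin.cons m (fun i : Fin (n + 1 + k + 1) => app x' y (Fin.cast (by omega) i))
            : Fin (n + 1 + (k + 1) + 1) → M) = app (Fin.cons m x') y := by
        funext j
        induction j using Fin.cases with
        | zero =>
            simp only [Fin.cons_zero, app, Fin.val_zero]
            refine Eq.trans ?_ (dif_pos (by omega)).symm
            have h0 : (⟨0, by omega⟩ : Fin (n + 2)) = 0 := Fin.ext (by simp)
            rw [h0, Fin.cons_zero]
        | succ i =>
            simp only [Fin.cons_succ, app, Fin.cast, Fin.val_succ]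
            by_cases hi : (i : ℕ) < n + 1
            · rw [dif_pos (by omega), dif_pos (by omega)]
              have hs : (⟨(i : ℕ) + 1, by omega⟩ : Fin (n + 2)) = Fin.succ ⟨(i : ℕ), hi⟩ :=
                Fin.ext (by simp)
              rw [hs, Fin.cons_succ]
            · rw [dif_neg (by omega), dif_neg (by omega)]
              exact congrArg y
                (Fin.ext (show (i:ℕ) - (n + 1) = (i:ℕ) + 1 - (n + 1 + 1) by omega))
      rw [heq]

/-- if f agrees U^{2k}-often on pairs of k-tuples, then f is
U^k-almost-everywhere equal to a constant r. -/
theorem stmt_10 {M : Type*} (U : Ultrafilter M) (k : ℕ) (f : (Fin (k + 1) → M) → M)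
    (h : iterMem U ((k + 1) + k)
      {w : Fin ((k + 1) + (k + 1)) → M |
        f (fun i => w (Fin.castAdd (k + 1) i)) = f (fun i => w (Fin.natAdd (k + 1) i))}) :
    ∃ r : M, iterMem U k {t : Fin (k + 1) → M | f t = r} := by
  have h' : iterMem U (k + (k + 1))
      {v : Fin (k + (k + 1) + 1) → M |
        f (fun i => v (Fin.cast (by omega) (Fin.castAdd (k + 1) i)))
          = f (fun i => v (Fin.cast (by omega) (Fin.natAdd (k + 1) i)))} := by
    refine iterMem_cast U (by omega : (k + 1) + k = k + (k + 1)) _ _ ?_ h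
    intro v
    exact Iff.rfl
  obtain ⟨x, hx⟩ := exists_sec U k k _ h'
  refine ⟨f x, ?_⟩
  refine iterMem_congr U (fun y => ?_) hx
  simp only [Set.mem_setOf_eq]
  have h1 : (fun i : Fin (k + 1) =>
      app x y (Fin.cast (by omega) (Fin.castAdd (k + 1) i))) = x := by
    funext i
    simp only [app, Fin.cast, Fin.coe_castAdd]
    rw [dif_pos (by omega)]
  have h2 : (fun i : Fin (k + 1) =>
      app x y (Fin.cast (by omega) (Fin.natAdd (k + 1) i))) = y := by
    funext i
    simp only [app, Fin.cast, Fin.coe_natAdd]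
    rw [dif_neg (by omega)]
    exact congrArg y (Fin.ext (by simp))
  rw [h1, h2]
  exact eq_comm
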